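/- The direct product of two Prieto groups is Prieto: if A and B are finitely generated left-orderable groups all of whose positive cones are coarsely connected, then every positive cone of A × B is coarsely connected. -/

import Mathlib

open scoped Pointwise

/-- A positive cone of a group `G`: a subsemigroup `P` such that
`G = P ⊔ P⁻¹ ⊔ {1}` (disjoint union). -/
def IsPositiveCone {G : Type*} [Group G] (P : Set G) : Prop :=
  (∀ a ∈ P, ∀ b ∈ P, a * b ∈ P) ∧
  (∀ g : G, g ∈ P ∨ g⁻¹ ∈ P ∨ g = 1) ∧
  (∀ g ∈ P, g⁻¹ ∉ P) ∧
  (1 : G) ∉ P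

/-- Word length of `g` with respect to the generating set `X`. -/
noncomputable def wordLength {G : Type*} [Group G] (X : Set G) (g : G) : ℕ :=
  sInf {n | ∃ l : List G, (∀ x ∈ l, x ∈ X) ∧ l.length = n ∧ l.prod = g}

/-- Word metric on `G` with respect to `X`. -/
noncomputable def wordDist {G : Type*} [Group G] (X : Set G) (g h : G) : ℕ :=
  wordLength X (g⁻¹ * h)

/-- An `r`-path from `a` to `b` supported in `S` (consecutive word-metric
distances at most `r`). -/
def IsRPath {G : Type*} [Group G] (X : Set G) (r : ℕ) (S : Set G) (a b : G) : Prop :=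
  ∃ l : List G, l ≠ [] ∧ l.head? = some a ∧ l.getLast? = some b ∧
    (∀ x ∈ l, x ∈ S) ∧ l.Chain' (fun u v => wordDist X u v ≤ r)

/-- `S` is `r`-coarsely connected in the Cayley graph `Γ(G,X)`. -/
def CoarselyConnectedWith {G : Type*} [Group G] (X : Set G) (r : ℕ) (S : Set G) : Prop :=
  ∀ a ∈ S, ∀ b ∈ S, IsRPath X r S a b

/-- `X` is a finite symmetric generating set of `G`. -/
def IsGenSet {G : Type*} [Group G] (X : Set G) : Prop :=
  X.Finite ∧ (∀ x ∈ X, x⁻¹ ∈ X) ∧ Subgroup.closure X = ⊤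

/-- A positive cone on a subset `K` of `G` (used for subgroups such as kernels). -/
def IsPositiveConeOn {G : Type*} [Group G] (K P : Set G) : Prop :=
  P ⊆ K ∧ (∀ a ∈ P, ∀ b ∈ P, a * b ∈ P) ∧ (∀ g ∈ K, g ∈ P ∨ g⁻¹ ∈ P ∨ g = 1) ∧
  (∀ g ∈ P, g⁻¹ ∉ P) ∧ (1 : G) ∉ P

/-- The sub-semigroup generated by `S`: nonempty products of elements of `S`. -/
def SemigroupClosure {G : Type*} [Group G] (S : Set G) : Set G :=
  {g | ∃ l : List G, l ≠ [] ∧ (∀ x ∈ l, x ∈ S) ∧ l.prod = g}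

section Aux

variable {G : Type*} [Group G] {X : Set G}

lemma exists_word (hX : IsGenSet X) (g : G) :
    ∃ l : List G, (∀ x ∈ l, x ∈ X) ∧ l.prod = g := by
  have hg : g ∈ Subgroup.closure X := by rw [hX.2.2]; trivial
  induction hg using Subgroup.closure_induction with
  | mem x hx => exact ⟨[x], by simpa using hx, by simp⟩
  | one => exact ⟨[], by simp, by simp⟩
  | mul x y hx hy ihx ihy =>
    obtain ⟨l1, hl1, hp1⟩ := ihx
    obtain ⟨l2, hl2, hp2⟩ := ihy
    refine ⟨l1 ++ l2, ?_, by simp [hp1, hp2]⟩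
    intro z hz
    rcases List.mem_append.mp hz with h | h
    exacts [hl1 z h, hl2 z h]
  | inv x hx ih =>
    obtain ⟨l, hl, hp⟩ := ih
    refine ⟨(l.map fun x => x⁻¹).reverse, ?_, by rw [← List.prod_inv_reverse, hp]⟩
    intro z hz
    simp only [List.mem_reverse, List.mem_map] at hz
    obtain ⟨w, hw, rfl⟩ := hz
    exact hX.2.1 w (hl w hw)

lemma wordLength_le {g : G} {l : List G}
    (hl : ∀ x ∈ l, x ∈ X) (hp : l.prod = g) : wordLength X g ≤ l.length :=
  Nat.sInf_le ⟨l, hl, rfl, hp⟩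

lemma wordLength_one : wordLength X (1 : G) = 0 :=
  Nat.le_zero.mp (wordLength_le (l := []) (by simp) (by simp))

lemma wordDist_self (g : G) : wordDist X g g = 0 := by
  simp [wordDist, wordLength_one]

lemma wordLength_spec (hX : IsGenSet X) (g : G) :
    ∃ l : List G, (∀ x ∈ l, x ∈ X) ∧ l.length = wordLength X g ∧ l.prod = g := by
  have hne : {n | ∃ l : List G, (∀ x ∈ l, x ∈ X) ∧ l.length = n ∧ l.prod = g}.Nonempty := by
    obtain ⟨l, hl, hp⟩ := exists_word hX g
    exact ⟨l.length, l, hl, rfl, hp⟩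
  exact Nat.sInf_mem hne

lemma wordLength_inv_le (hsym : ∀ x ∈ X, x⁻¹ ∈ X) (g : G) :
    wordLength X g⁻¹ ≤ wordLength X g := by
  by_cases hne : {n | ∃ l : List G, (∀ x ∈ l, x ∈ X) ∧ l.length = n ∧ l.prod = g}.Nonempty
  · obtain ⟨l, hl, hlen, hp⟩ := Nat.sInf_mem hne
    calc wordLength X g⁻¹ ≤ (List.map (fun x => x⁻¹) l).reverse.length := by
          refine wordLength_le ?_ (by rw [← List.prod_inv_reverse, hp])
          intro z hz
          simp only [List.mem_reverse, List.mem_map] at hz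
          obtain ⟨w, hw, rfl⟩ := hz
          exact hsym w (hl w hw)
      _ = wordLength X g := by simpa [wordLength] using hlen
  · have hne' : ¬ {n | ∃ l : List G, (∀ x ∈ l, x ∈ X) ∧ l.length = n ∧ l.prod = g⁻¹}.Nonempty := by
      rintro ⟨n, l, hl, hlen, hp⟩
      refine hne ⟨(List.map (fun x => x⁻¹) l).reverse.length,
        (List.map (fun x => x⁻¹) l).reverse, ?_, rfl, ?_⟩
      · intro z hz
        simp only [List.mem_reverse, List.mem_map] at hz
        obtain ⟨w, hw, rfl⟩ := hz
        exact hsym w (hl w hw)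
      · rw [← List.prod_inv_reverse, hp, inv_inv]
    unfold wordLength
    rw [Set.not_nonempty_iff_eq_empty] at hne hne'
    rw [hne, hne', Nat.sInf_empty]

lemma wordDist_symm (hsym : ∀ x ∈ X, x⁻¹ ∈ X) (u v : G) :
    wordDist X u v = wordDist X v u := by
  have h : ∀ a b : G, wordDist X a b ≤ wordDist X b a := by
    intro a b
    have := wordLength_inv_le hsym (b⁻¹ * a)
    simpa [wordDist, mul_inv_rev] using this
  exact le_antisymm (h u v) (h v u)

lemma wordLength_map_le {H : Type*} [Group H] {Y : Set H} (hX : IsGenSet X)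
    (f : G →* H) (hf : ∀ x ∈ X, f x ∈ Y) (g : G) :
    wordLength Y (f g) ≤ wordLength X g := by
  obtain ⟨l, hl, hlen, hp⟩ := wordLength_spec hX g
  calc wordLength Y (f g) ≤ (l.map f).length := by
        refine wordLength_le ?_ (by rw [← map_list_prod, hp])
        intro z hz
        simp only [List.mem_map] at hz
        obtain ⟨w, hw, rfl⟩ := hz
        exact hf w (hl w hw)
    _ = wordLength X g := by simpa using hlen

section Path

variable {r : ℕ} {S : Set G} {a b c : G}

lemma isRPath_singleton (h : a ∈ S) : IsRPath X r S a a :=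
  ⟨[a], by simp, rfl, rfl, by simpa using h, List.isChain_singleton a⟩

lemma isRPath_trans' (h1 : IsRPath X r S a b) {b' : G} (hbb : wordDist X b b' ≤ r)
    (h2 : IsRPath X r S b' c) : IsRPath X r S a c := by
  obtain ⟨l1, hne1, hh1, hl1, hm1, hc1⟩ := h1
  obtain ⟨l2, hne2, hh2, hl2, hm2, hc2⟩ := h2
  refine ⟨l1 ++ l2, by simp [hne1], ?_, ?_, ?_, ?_⟩
  · rwa [List.head?_append_of_ne_nil _ hne1]
  · rwa [List.getLast?_append_of_ne_nil _ hne2]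
  · intro x hx; rcases List.mem_append.mp hx with h | h; exacts [hm1 x h, hm2 x h]
  · unfold List.Chain'
    rw [List.isChain_append]
    refine ⟨hc1, hc2, ?_⟩
    intro x hx y hy
    rw [hl1] at hx; rw [hh2] at hy
    cases hx; cases hy; exact hbb

lemma isRPath_trans (h1 : IsRPath X r S a b) (h2 : IsRPath X r S b c) :
    IsRPath X r S a c :=
  isRPath_trans' h1 (by simp [wordDist_self]) h2

lemma isRPath_reverse (hsym : ∀ x ∈ X, x⁻¹ ∈ X) (h : IsRPath X r S a b) :
    IsRPath X r S b a := by
  obtain ⟨l, hne, hh, hl, hm, hc⟩ := h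
  refine ⟨l.reverse, by simpa using hne, ?_, ?_, by simpa using hm, ?_⟩
  · rwa [List.head?_reverse]
  · rwa [List.getLast?_reverse]
  · unfold List.Chain'
    rw [List.isChain_reverse]
    exact hc.imp (fun u v h => by rwa [wordDist_symm hsym])

lemma isRPath_map {H : Type*} [Group H] {Y : Set H} {T : Set H}
    (f : G → H) (hlip : ∀ u v : G, wordDist Y (f u) (f v) ≤ wordDist X u v)
    (hmem : ∀ x ∈ S, f x ∈ T) (h : IsRPath X r S a b) :
    IsRPath Y r T (f a) (f b) := by
  obtain ⟨l, hne, hh, hl, hm, hc⟩ := h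
  refine ⟨l.map f, by simpa using hne, ?_, ?_, ?_, ?_⟩
  · rw [List.head?_map, hh]; rfl
  · rw [List.getLast?_map, hl]; rfl
  · intro x hx
    simp only [List.mem_map] at hx
    obtain ⟨w, hw, rfl⟩ := hx
    exact hmem w (hm w hw)
  · unfold List.Chain'
    rw [List.isChain_map]
    exact hc.imp (fun u v h => (hlip u v).trans h)

lemma isRPath_mono {r' : ℕ} (hr : r ≤ r') (h : IsRPath X r S a b) :
    IsRPath X r' S a b := by
  obtain ⟨l, hne, hh, hl, hm, hc⟩ := h
  exact ⟨l, hne, hh, hl, hm, hc.imp fun u v h => h.trans hr⟩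

end Path
end Aux

/-- the direct product of two Prieto groups is Prieto. -/
theorem stmt_12 {A B : Type*} [Group A] [Group B]
    (XA : Set A) (hXA : IsGenSet XA) (XB : Set B) (hXB : IsGenSet XB)
    (hA : ∀ P : Set A, IsPositiveCone P → ∃ r : ℕ, 1 ≤ r ∧ CoarselyConnectedWith XA r P)
    (hB : ∀ P : Set B, IsPositiveCone P → ∃ r : ℕ, 1 ≤ r ∧ CoarselyConnectedWith XB r P)
    (P : Set (A × B)) (hP : IsPositiveCone P) :
    ∃ r : ℕ, 1 ≤ r ∧ CoarselyConnectedWith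
      ((fun a : A => ((a, 1) : A × B)) '' XA ∪ (fun b : B => ((1, b) : A × B)) '' XB)
      r P := by
  classical
  obtain ⟨mulP, triP, asymP, oneP⟩ := hP
  set X : Set (A × B) :=
    (fun a : A => ((a, 1) : A × B)) '' XA ∪ (fun b : B => ((1, b) : A × B)) '' XB with hXdef
  set PA : Set A := {a : A | ((a, (1 : B)) : A × B) ∈ P} with hPAdef
  set PB : Set B := {b : B | (((1 : A), b) : A × B) ∈ P} with hPBdef
  have memPA : ∀ a : A, a ∈ PA ↔ ((a, (1 : B)) : A × B) ∈ P := fun a => Iff.rfl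
  have memPB : ∀ b : B, b ∈ PB ↔ (((1 : A), b) : A × B) ∈ P := fun b => Iff.rfl
  -- X is symmetric
  have hsymX : ∀ x ∈ X, x⁻¹ ∈ X := by
    rintro x (⟨a, ha, rfl⟩ | ⟨b, hb, rfl⟩)
    · exact Or.inl ⟨a⁻¹, hXA.2.1 a ha, by simp [Prod.inv_mk]⟩
    · exact Or.inr ⟨b⁻¹, hXB.2.1 b hb, by simp [Prod.inv_mk]⟩
  have hXmemA : ∀ x ∈ XA, ((x, (1 : B)) : A × B) ∈ X := fun x hx => Or.inl ⟨x, hx, rfl⟩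
  have hXmemB : ∀ x ∈ XB, (((1 : A), x) : A × B) ∈ X := fun x hx => Or.inr ⟨x, hx, rfl⟩
  -- PA, PB are positive cones
  have conePA : IsPositiveCone PA := by
    refine ⟨?_, ?_, ?_, ?_⟩
    · intro a ha b hb
      have := mulP _ ha _ hb
      simpa [Prod.mk_mul_mk, memPA] using this
    · intro a
      rcases triP (a, 1) with h | h | h
      · exact Or.inl h
      · exact Or.inr (Or.inl (by simpa [Prod.inv_mk, memPA] using h))
      · exact Or.inr (Or.inr (by simpa [Prod.ext_iff] using h))
    · intro a ha h
      exact asymP _ ha (by simpa [Prod.inv_mk, memPA] using h)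
    · exact oneP
  have conePB : IsPositiveCone PB := by
    refine ⟨?_, ?_, ?_, ?_⟩
    · intro a ha b hb
      have := mulP _ ha _ hb
      simpa [Prod.mk_mul_mk, memPB] using this
    · intro b
      rcases triP (1, b) with h | h | h
      · exact Or.inl h
      · exact Or.inr (Or.inl (by simpa [Prod.inv_mk, memPB] using h))
      · exact Or.inr (Or.inr (by simpa [Prod.ext_iff] using h))
    · intro b hb h
      exact asymP _ hb (by simpa [Prod.inv_mk, memPB] using h)
    · exact oneP
  obtain ⟨rA, hrA1, hconA⟩ := hA PA conePA
  obtain ⟨rB, hrB1, hconB⟩ := hB PB conePB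
  -- base points
  obtain ⟨sA, hsA⟩ : ∃ sA : A, PA.Nonempty → sA ∈ PA := by
    by_cases h : PA.Nonempty
    · exact ⟨h.choose, fun _ => h.choose_spec⟩
    · exact ⟨1, fun hh => absurd hh h⟩
  obtain ⟨sB, hsB⟩ : ∃ sB : B, PB.Nonempty → sB ∈ PB := by
    by_cases h : PB.Nonempty
    · exact ⟨h.choose, fun _ => h.choose_spec⟩
    · exact ⟨1, fun hh => absurd hh h⟩
  set LA := wordLength XA sA with hLAdef
  set LB := wordLength XB sB with hLBdef
  set r := rA + rB + LA + LB with hr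
  have hrAr : rA ≤ r := by omega
  have hrBr : rB ≤ r := by omega
  have hLAr : LA ≤ r := by omega
  have hLBr : LB ≤ r := by omega
  -- distance estimates
  have hdistA : ∀ (c : A) (b : B) (u v : A),
      wordDist X ((c * u, b) : A × B) ((c * v, b) : A × B) ≤ wordDist XA u v := by
    intro c b u v
    have h1 : ((c * u, b) : A × B)⁻¹ * ((c * v, b) : A × B)
        = (MonoidHom.inl A B) (u⁻¹ * v) := by
      simp only [Prod.inv_mk, Prod.mk_mul_mk, MonoidHom.inl_apply, Prod.mk.injEq]
      constructor
      · group
      · exact inv_mul_cancel b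
    show wordLength X _ ≤ wordLength XA (u⁻¹ * v)
    rw [h1]
    exact wordLength_map_le hXA (MonoidHom.inl A B) (fun x hx => hXmemA x hx) (u⁻¹ * v)
  have hdistB : ∀ (a : A) (c : B) (u v : B),
      wordDist X ((a, c * u) : A × B) ((a, c * v) : A × B) ≤ wordDist XB u v := by
    intro a c u v
    have h1 : ((a, c * u) : A × B)⁻¹ * ((a, c * v) : A × B)
        = (MonoidHom.inr A B) (u⁻¹ * v) := by
      simp only [Prod.inv_mk, Prod.mk_mul_mk, MonoidHom.inr_apply, Prod.mk.injEq]
      constructor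
      · exact inv_mul_cancel a
      · group
    show wordLength X _ ≤ wordLength XB (u⁻¹ * v)
    rw [h1]
    exact wordLength_map_le hXB (MonoidHom.inr A B) (fun x hx => hXmemB x hx) (u⁻¹ * v)
  -- basic path helpers
  have hA_path : ∀ (c : A) (b : B) (t : A), t ∈ PA →
      (∀ α ∈ PA, ((c * α, b) : A × B) ∈ P) → ((c, b) : A × B) ∈ P →
      IsRPath X r P (c, b) (c * t, b) := by
    intro c b t ht hmem hcb
    have hsA' : sA ∈ PA := hsA ⟨t, ht⟩
    have p1 : IsRPath XA r PA sA t := isRPath_mono hrAr (hconA sA hsA' t ht)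
    have p2 : IsRPath X r P (c * sA, b) (c * t, b) :=
      isRPath_map (fun α => ((c * α, b) : A × B)) (fun u v => hdistA c b u v)
        (fun α hα => hmem α hα) p1
    refine isRPath_trans' (isRPath_singleton hcb) ?_ p2
    have h2 : wordDist X ((c, b) : A × B) ((c * sA, b) : A × B) ≤ LA := by
      have := hdistA c b 1 sA
      simpa [wordDist, hLAdef] using this
    exact h2.trans hLAr
  have hB_path : ∀ (a : A) (c : B) (t : B), t ∈ PB →
      (∀ β ∈ PB, ((a, c * β) : A × B) ∈ P) → ((a, c) : A × B) ∈ P →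
      IsRPath X r P (a, c) (a, c * t) := by
    intro a c t ht hmem hac
    have hsB' : sB ∈ PB := hsB ⟨t, ht⟩
    have p1 : IsRPath XB r PB sB t := isRPath_mono hrBr (hconB sB hsB' t ht)
    have p2 : IsRPath X r P (a, c * sB) (a, c * t) :=
      isRPath_map (fun β => ((a, c * β) : A × B)) (fun u v => hdistB a c u v)
        (fun β hβ => hmem β hβ) p1
    refine isRPath_trans' (isRPath_singleton hac) ?_ p2
    have h2 : wordDist X ((a, c) : A × B) ((a, c * sB) : A × B) ≤ LB := by
      have := hdistB a c 1 sB
      simpa [wordDist, hLBdef] using this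
    exact h2.trans hLBr
  have hA_row : ∀ (b : B) (u v : A), u ∈ PA → v ∈ PA →
      (∀ α ∈ PA, ((α, b) : A × B) ∈ P) → IsRPath X r P (u, b) (v, b) := by
    intro b u v hu hv hmem
    have p1 : IsRPath XA r PA u v := isRPath_mono hrAr (hconA u hu v hv)
    exact isRPath_map (fun α => ((α, b) : A × B))
      (fun x y => by simpa using hdistA 1 b x y) hmem p1
  have hB_col : ∀ (a : A) (u v : B), u ∈ PB → v ∈ PB →
      (∀ β ∈ PB, ((a, β) : A × B) ∈ P) → IsRPath X r P (a, u) (a, v) := by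
    intro a u v hu hv hmem
    have p1 : IsRPath XB r PB u v := isRPath_mono hrBr (hconB u hu v hv)
    exact isRPath_map (fun β => ((a, β) : A × B))
      (fun x y => by simpa using hdistB a 1 x y) hmem p1
  -- membership helpers
  have memAB : ∀ a ∈ PA, ∀ b ∈ PB, ((a, b) : A × B) ∈ P := by
    intro a ha b hb
    have := mulP _ ha _ hb
    simpa [Prod.mk_mul_mk] using this
  have memCol : ∀ (a : A), (a ∈ PA ∨ a = 1) → ∀ β ∈ PB, ((a, β) : A × B) ∈ P := by
    rintro a (ha | rfl) β hβ
    · exact memAB a ha β hβ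
    · exact hβ
  have memRow : ∀ (b : B), (b ∈ PB ∨ b = 1) → ∀ α ∈ PA, ((α, b) : A × B) ∈ P := by
    rintro b (hb | rfl) α hα
    · exact memAB α hα b hb
    · exact hα
  -- composite helpers
  have Hcol : ∀ (a : A), (a ∈ PA ∨ a = 1) → ∀ y y' : B, y ∈ PB → y' ∈ PB →
      IsRPath X r P (a, y) (a, y') := by
    intro a ha y y' hy hy'
    exact hB_col a y y' hy hy' (memCol a ha)
  have Hrow : ∀ (b : B), (b ∈ PB ∨ b = 1) → ∀ u v : A, u ∈ PA → v ∈ PA →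
      IsRPath X r P (u, b) (v, b) := by
    intro b hb u v hu hv
    exact hA_row b u v hu hv (memRow b hb)
  have Hext : ∀ (x : A) (y : B), x ∈ PA → y ∈ PB → IsRPath X r P (1, y) (x, y) := by
    intro x y hx hy
    have := hA_path 1 y x hx (fun α hα => by simpa using memAB α hα y hy) hy
    simpa using this
  have Hup : ∀ (x : A) (y : B), x ∈ PA → y ∈ PB → IsRPath X r P (x, 1) (x, y) := by
    intro x y hx hy
    have := hB_path x 1 y hy (fun β hβ => by simpa using memAB x hx β hβ) hx
    simpa using this
  -- trichotomies
  have triA : ∀ a : A, a ∈ PA ∨ a⁻¹ ∈ PA ∨ a = 1 := conePA.2.1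
  have triB : ∀ b : B, b ∈ PB ∨ b⁻¹ ∈ PB ∨ b = 1 := conePB.2.1
  have negA : ∀ (a : A) (b : B), ((a, b) : A × B) ∈ P → a⁻¹ ∈ PA → b ∈ PB := by
    intro a b hab ha
    have := mulP _ ha _ hab
    simpa [Prod.mk_mul_mk, memPB] using this
  have negB : ∀ (a : A) (b : B), ((a, b) : A × B) ∈ P → b⁻¹ ∈ PB → a ∈ PA := by
    intro a b hab hb
    have := mulP _ hab _ hb
    simpa [Prod.mk_mul_mk, memPA] using this
  -- every point of P connects to a "core" point
  have to_core : ∀ (a : A) (b : B), ((a, b) : A × B) ∈ P →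
      ∃ (a' : A) (b' : B), ((a', b') : A × B) ∈ P ∧ (a' ∈ PA ∨ a' = 1) ∧
        (b' ∈ PB ∨ b' = 1) ∧ IsRPath X r P (a, b) (a', b') := by
    intro a b hab
    rcases triA a with ha | ha | ha
    · rcases triB b with hb | hb | hb
      · exact ⟨a, b, hab, Or.inl ha, Or.inl hb, isRPath_singleton hab⟩
      · refine ⟨a, 1, negB a b hab hb, Or.inl (negB a b hab hb), Or.inr rfl, ?_⟩
        have hm : ∀ β ∈ PB, ((a, b * β) : A × B) ∈ P := by
          intro β hβ
          have := mulP _ hab _ hβ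
          simpa [Prod.mk_mul_mk] using this
        have := hB_path a b b⁻¹ hb hm hab
        simpa using this
      · subst hb
        exact ⟨a, 1, hab, Or.inl ha, Or.inr rfl, isRPath_singleton hab⟩
    · have hb : b ∈ PB := negA a b hab ha
      refine ⟨1, b, hb, Or.inr rfl, Or.inl hb, ?_⟩
      have hm : ∀ α ∈ PA, ((a * α, b) : A × B) ∈ P := by
        intro α hα
        have := mulP _ hab _ hα
        simpa [Prod.mk_mul_mk] using this
      have := hA_path a b a⁻¹ ha hm hab
      simpa using this
    · subst ha
      rcases triB b with hb | hb | hb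
      · exact ⟨1, b, hab, Or.inr rfl, Or.inl hb, isRPath_singleton hab⟩
      · exact absurd (negB 1 b hab hb) oneP
      · subst hb; exact absurd hab oneP
  -- core points are connected
  have core_core : ∀ (a : A) (b : B) (a' : A) (b' : B),
      ((a, b) : A × B) ∈ P → (a ∈ PA ∨ a = 1) → (b ∈ PB ∨ b = 1) →
      ((a', b') : A × B) ∈ P → (a' ∈ PA ∨ a' = 1) → (b' ∈ PB ∨ b' = 1) →
      IsRPath X r P (a, b) (a', b') := by
    intro a b a' b' hab ha hb ha'b' ha' hb'
    rcases ha with ha | rfl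
    · rcases hb with hb | rfl
      · rcases ha' with ha' | rfl
        · rcases hb' with hb' | rfl
          · exact isRPath_trans (Hcol a (Or.inl ha) b b' hb hb')
              (Hrow b' (Or.inl hb') a a' ha ha')
          · exact isRPath_trans (Hrow b (Or.inl hb) a a' ha ha')
              (isRPath_reverse hsymX (Hup a' b ha' hb))
        · rcases hb' with hb' | rfl
          · exact isRPath_trans (Hcol a (Or.inl ha) b b' hb hb')
              (isRPath_reverse hsymX (Hext a b' ha hb'))
          · exact absurd ha'b' oneP
      · rcases ha' with ha' | rfl
        · rcases hb' with hb' | rfl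
          · exact isRPath_trans (Hup a b' ha hb') (Hrow b' (Or.inl hb') a a' ha ha')
          · exact Hrow 1 (Or.inr rfl) a a' ha ha'
        · rcases hb' with hb' | rfl
          · exact isRPath_trans (Hup a b' ha hb') (isRPath_reverse hsymX (Hext a b' ha hb'))
          · exact absurd ha'b' oneP
    · rcases hb with hb | rfl
      · rcases ha' with ha' | rfl
        · rcases hb' with hb' | rfl
          · exact isRPath_trans (Hext a' b ha' hb) (Hcol a' (Or.inl ha') b b' hb hb')
          · exact isRPath_trans (Hext a' b ha' hb) (isRPath_reverse hsymX (Hup a' b ha' hb))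
        · rcases hb' with hb' | rfl
          · exact Hcol 1 (Or.inr rfl) b b' hb hb'
          · exact absurd ha'b' oneP
      · exact absurd hab oneP
  refine ⟨r, by omega, ?_⟩
  intro p hp q hq
  obtain ⟨a, b⟩ := p
  obtain ⟨a', b'⟩ := q
  obtain ⟨a2, b2, h2, ha2, hb2, pp⟩ := to_core a b hp
  obtain ⟨a3, b3, h3, ha3, hb3, pq⟩ := to_core a' b' hq
  exact isRPath_trans pp (isRPath_trans
    (core_core a2 b2 a3 b3 h2 ha2 hb2 h3 ha3 hb3) (isRPath_reverse hsymX pq))
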